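/- For every integer n ≥ 1 and every r with 0 ≤ r ≤ n−1, the centralizer of a^{2r+1}b² in U_{6n} is C_{U_{6n}}(a^{2r+1}b²) = {a^{2s} : 0 ≤ s ≤ n−1} ∪ {a^{2s+1}b² : 0 ≤ s ≤ n−1}, a subgroup of order 2n. -/

import Mathlib

/-- The inversion automorphism of `Multiplicative (ZMod 3)` (i.e. `b ↦ b⁻¹`). -/
def negAut : MulAut (Multiplicative (ZMod 3)) := MulEquiv.inv (Multiplicative (ZMod 3))

lemma negAut_sq : negAut * negAut = 1 := by
  ext x
  simp [negAut]

/-- The action of `ZMod (2*n)` on `Multiplicative (ZMod 3)`, where the generator acts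
by inversion (negation). -/
def U6nAct (n : ℕ) : Multiplicative (ZMod (2 * n)) →* MulAut (Multiplicative (ZMod 3)) :=
  AddMonoidHom.toMultiplicativeLeft
    (ZMod.lift (2 * n) ⟨zmultiplesHom _ (Additive.ofMul negAut), by
      show ((2 * n : ℕ) : ℤ) • Additive.ofMul negAut = 0
      have : negAut ^ (2 * n) = 1 := by
        rw [pow_mul, pow_two, negAut_sq, one_pow]
      rw [← zpow_natCast negAut, Nat.cast_mul] at this
      rw [show ((2 * n : ℕ) : ℤ) • Additive.ofMul negAut
            = Additive.ofMul (negAut ^ ((2 * n : ℕ) : ℤ)) from rfl]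
      rw [Nat.cast_mul, this]; rfl⟩)


lemma act_natCast (n k : ℕ) :
    U6nAct n (Multiplicative.ofAdd ((k : ZMod (2*n)))) = negAut ^ k := by
  have h : ((k : ℤ) : ZMod (2*n)) = (k : ZMod (2*n)) := by push_cast; rfl
  rw [U6nAct, AddMonoidHom.coe_toMultiplicativeLeft, Function.comp_apply, Function.comp_apply]
  rw [toAdd_ofAdd, ← h, ZMod.lift_coe]
  show Additive.toMul ((k : ℤ) • Additive.ofMul negAut) = _
  rw [← ofMul_zpow, toMul_ofMul, zpow_natCast]

/-- The group `U_{6n} = ⟨a, b | a^(2n) = b³ = 1, a⁻¹ b a = b⁻¹⟩`, realized as the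
semidirect product `(ZMod 3) ⋊ (ZMod (2n))` where the generator of `ZMod (2n)` acts by
negation. -/
abbrev U6n (n : ℕ) := SemidirectProduct (Multiplicative (ZMod 3))
    (Multiplicative (ZMod (2 * n))) (U6nAct n)

/-- The generator `a` of `U_{6n}`, of order `2n`. -/
def Ua (n : ℕ) : U6n n := SemidirectProduct.inr (Multiplicative.ofAdd 1)

/-- The generator `b` of `U_{6n}`, of order `3`. -/
def Ub (n : ℕ) : U6n n := SemidirectProduct.inl (Multiplicative.ofAdd 1)

open SemidirectProduct Multiplicative

lemma negAut_apply (x : Multiplicative (ZMod 3)) : negAut x = x⁻¹ := rfl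

lemma negAut_pow_even (s : ℕ) : negAut ^ (2 * s) = 1 := by
  rw [pow_mul, pow_two, negAut_sq, one_pow]

lemma negAut_pow_odd (s : ℕ) : negAut ^ (2 * s + 1) = negAut := by
  rw [pow_succ, negAut_pow_even, one_mul]

lemma Ua_pow (n k : ℕ) :
    Ua n ^ k = SemidirectProduct.inr (ofAdd ((k : ZMod (2 * n)))) := by
  rw [Ua, ← map_pow, ← ofAdd_nsmul, nsmul_eq_mul, mul_one]

lemma Ub_sq (n : ℕ) :
    Ub n ^ 2 = (SemidirectProduct.inl (ofAdd ((2 : ZMod 3))) : U6n n) := by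
  rw [Ub, ← map_pow, ← ofAdd_nsmul]
  norm_num

lemma Uab2 (n k : ℕ) :
    Ua n ^ (2 * k + 1) * Ub n ^ 2 =
      (⟨ofAdd 1, ofAdd (((2 * k + 1 : ℕ) : ZMod (2 * n)))⟩ : U6n n) := by
  rw [Ua_pow, Ub_sq]
  refine SemidirectProduct.ext ?_ ?_
  · show (1 : Multiplicative (ZMod 3)) * (U6nAct n) (ofAdd _) (ofAdd 2) = ofAdd 1
    rw [one_mul, act_natCast, negAut_pow_odd, negAut_apply]
    decide
  · show ofAdd _ * (1 : Multiplicative (ZMod (2*n))) = ofAdd _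
    rw [mul_one]


/-- The non-commuting graph of `U_{6n}`: vertices are the non-central elements, two
distinct vertices are adjacent iff they do not commute. -/
def ncGraph (n : ℕ) : SimpleGraph {x : U6n n // x ∉ Subgroup.center (U6n n)} where
  Adj u v := u.val * v.val ≠ v.val * u.val
  symm := ⟨fun _ _ h => fun e => h e.symm⟩
  loopless := ⟨fun _ h => h rfl⟩

/-- For `0 ≤ r ≤ n-1`, the centralizer of `a^(2r+1)·b²` in `U_{6n}` is
`{a^(2s) : 0 ≤ s ≤ n-1} ∪ {a^(2s+1)·b² : 0 ≤ s ≤ n-1}`, a subgroup of order `2n`. -/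
theorem U6n_centralizer_odd_ab2 (n : ℕ) (hn : 1 ≤ n) (r : ℕ) (hr : r < n) :
    (Subgroup.centralizer {Ua n ^ (2 * r + 1) * Ub n ^ 2} : Set (U6n n)) =
      {x | ∃ s < n, x = Ua n ^ (2 * s)} ∪
        {x | ∃ s < n, x = Ua n ^ (2 * s + 1) * Ub n ^ 2} ∧
    Nat.card (Subgroup.centralizer {Ua n ^ (2 * r + 1) * Ub n ^ 2} : Subgroup (U6n n))
      = 2 * n := by
  have : NeZero (2 * n) := ⟨by omega⟩
  set g := Ua n ^ (2 * r + 1) * Ub n ^ 2 with hg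
  have hgc : g = (⟨ofAdd 1, ofAdd (((2 * r + 1 : ℕ) : ZMod (2 * n)))⟩ : U6n n) := Uab2 n r
  set A : Set (U6n n) := {x | ∃ s < n, x = Ua n ^ (2 * s)} with hA
  set B : Set (U6n n) := {x | ∃ s < n, x = Ua n ^ (2 * s + 1) * Ub n ^ 2} with hB
  have hset : (Subgroup.centralizer {g} : Set (U6n n)) = A ∪ B := by
    ext x
    constructor
    · intro hx
      rw [SetLike.mem_coe, Subgroup.mem_centralizer_iff] at hx
      have hc := hx g rfl
      have hl := congrArg SemidirectProduct.left hc
      simp only [SemidirectProduct.mul_left] at hl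
      set m := (Multiplicative.toAdd x.right).val with hm
      have hmlt : m < 2 * n := ZMod.val_lt _
      have hxr : x.right = ofAdd ((m : ZMod (2 * n))) := by
        rw [hm, ZMod.natCast_val, ZMod.cast_id, ofAdd_toAdd]
      rw [hxr, hgc, act_natCast, act_natCast, negAut_pow_odd, negAut_apply] at hl
      rcases Nat.even_or_odd m with ⟨s, hs⟩ | ⟨s, hs⟩
      · have hs2 : m = 2 * s := by omega
        rw [hs2, negAut_pow_even] at hl
        have hxl : x.left = 1 := by
          revert hl
          show ofAdd (1 : ZMod 3) * (x.left)⁻¹ = x.left * (1 : MulAut (Multiplicative (ZMod 3))) (ofAdd (1 : ZMod 3)) → x.left = 1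
          generalize x.left = β
          revert β
          decide
        left
        refine ⟨s, by omega, ?_⟩
        rw [Ua_pow]
        refine SemidirectProduct.ext ?_ ?_
        · rw [hxl]; rfl
        · rw [hxr, hs2]; rfl
      · have hs2 : m = 2 * s + 1 := hs
        rw [hs2, negAut_pow_odd] at hl
        have hxl : x.left = ofAdd 1 := by
          revert hl
          show ofAdd (1 : ZMod 3) * (x.left)⁻¹ = x.left * negAut (ofAdd (1 : ZMod 3)) → x.left = ofAdd (1 : ZMod 3)
          generalize x.left = β
          revert β
          decide
        right
        refine ⟨s, by omega, ?_⟩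
        rw [Uab2]
        refine SemidirectProduct.ext ?_ ?_
        · rw [hxl]
        · rw [hxr, hs2]
    · intro hx
      rw [SetLike.mem_coe, Subgroup.mem_centralizer_iff]
      intro h hh
      rw [Set.mem_singleton_iff] at hh
      subst hh
      rcases hx with ⟨s, _, rfl⟩ | ⟨s, _, rfl⟩
      · refine SemidirectProduct.ext ?_ ?_
        · rw [hgc, Ua_pow]
          simp only [SemidirectProduct.mul_left, SemidirectProduct.left_inr,
            SemidirectProduct.right_inr, act_natCast, negAut_pow_even, negAut_pow_odd,
            map_one, mul_one, one_mul]
          rfl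
        · simp only [SemidirectProduct.mul_right]; exact mul_comm _ _
      · refine SemidirectProduct.ext ?_ ?_
        · rw [hgc, Uab2]
          simp only [SemidirectProduct.mul_left, act_natCast, negAut_pow_odd]
        · simp only [SemidirectProduct.mul_right]; exact mul_comm _ _
  refine ⟨hset, ?_⟩
  have hAi : A = (fun s => Ua n ^ (2 * s)) '' (Set.Iio n) := by
    ext x; simp [hA, Set.mem_image, eq_comm]
  have hBi : B = (fun s => Ua n ^ (2 * s + 1) * Ub n ^ 2) '' (Set.Iio n) := by
    ext x; simp [hB, Set.mem_image, eq_comm]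
  have hinj : ∀ s₁ < n, ∀ s₂ < n, ((s₁ : ZMod (2*n))) = (s₂ : ZMod (2*n)) →
      2 * s₁ < 2 * n → True := fun _ _ _ _ _ _ => trivial
  have rinj : ∀ {k₁ k₂ : ℕ}, k₁ < 2 * n → k₂ < 2 * n →
      ((k₁ : ZMod (2 * n))) = (k₂ : ZMod (2 * n)) → k₁ = k₂ := by
    intro k₁ k₂ h₁ h₂ h
    have := congrArg ZMod.val h
    rwa [ZMod.val_cast_of_lt h₁, ZMod.val_cast_of_lt h₂] at this
  have hAinj : Set.InjOn (fun s => Ua n ^ (2 * s)) (Set.Iio n) := by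
    intro s₁ h₁ s₂ h₂ h
    simp only [Ua_pow, SemidirectProduct.inr_inj, ofAdd.apply_eq_iff_eq] at h
    have := rinj (by simp at h₁; omega) (by simp at h₂; omega) h
    omega
  have hBinj : Set.InjOn (fun s => Ua n ^ (2 * s + 1) * Ub n ^ 2) (Set.Iio n) := by
    intro s₁ h₁ s₂ h₂ h
    simp only [Uab2] at h
    have h' := congrArg SemidirectProduct.right h
    simp only [ofAdd.apply_eq_iff_eq] at h'
    have := rinj (by simp at h₁; omega) (by simp at h₂; omega) h'
    omega
  have hIio : (Set.Iio n).ncard = n := by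
    rw [← Finset.coe_range, Set.ncard_coe_finset, Finset.card_range]
  have hAcard : A.ncard = n := by rw [hAi, Set.ncard_image_of_injOn hAinj, hIio]
  have hBcard : B.ncard = n := by rw [hBi, Set.ncard_image_of_injOn hBinj, hIio]
  have hdisj : Disjoint A B := by
    rw [Set.disjoint_left]
    rintro x ⟨s, _, rfl⟩ ⟨t, _, hxb⟩
    have := congrArg SemidirectProduct.left hxb
    rw [Ua_pow, Uab2] at this
    have h1 : (1 : Multiplicative (ZMod 3)) = ofAdd (1 : ZMod 3) := this
    exact absurd h1 (by decide)
  have hAfin : A.Finite := by rw [hAi]; exact (Set.finite_Iio n).image _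
  have hBfin : B.Finite := by rw [hBi]; exact (Set.finite_Iio n).image _
  calc Nat.card (Subgroup.centralizer {g} : Subgroup (U6n n))
      = Nat.card ↥(A ∪ B) := Nat.card_congr (Equiv.setCongr hset)
    _ = (A ∪ B).ncard := (Nat.card_coe_set_eq _).symm
    _ = 2 * n := by
        rw [Set.ncard_union_eq hdisj hAfin hBfin, hAcard, hBcard]; omega
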